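/- For a partition λ of k-1 and n ≥ k-1, the identity Krew(λ+(1^{ℓ(λ)})) · multinomial(n; λ+(1^{n+1-k})) = (n!/k!) · ∑_{α ~ λ} (k-1+ℓ(α))! / (ℓ(α)! · ∏_{i≥1}(α_i+1)!) holds, where the sum is over all compositions α that are rearrangements of λ, λ+(1^{ℓ(λ)}) adds 1 to each of the first ℓ(λ) parts, and λ+(1^{n+1-k}) denotes the partition of n obtained by adding 1 to the first n+1-k parts (padding λ with zeros). -/

import Mathlib

open Finset

lemma card_rearrange : ∀ (n : ℕ) (m : Multiset ℕ), Multiset.card m = n →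
    ∀ (s : Finset ℕ), (∀ x ∈ m, x ∈ s) →
    ((Fintype.piFinset fun _ : Fin n => s).filter
        (fun α => Multiset.ofList (List.ofFn α) = m)).card *
      ∏ j ∈ s, (m.count j).factorial = n.factorial := by
  intro n
  induction n with
  | zero =>
    intro m hm s hs
    obtain rfl := Multiset.card_eq_zero.mp hm
    rw [Finset.filter_true_of_mem (fun α _ => by simp [List.ofFn_zero])]
    simp
  | succ n ih =>
    intro m hm s hs
    have hfib : ∀ a ∈ s,
        (((Fintype.piFinset fun _ : Fin (n+1) => s).filter
            (fun α => Multiset.ofList (List.ofFn α) = m)).filter (fun α => α 0 = a)).card *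
          ∏ j ∈ s, (m.count j).factorial = m.count a * n.factorial := by
      intro a ha
      by_cases ham : a ∈ m
      · have hcard : (((Fintype.piFinset fun _ : Fin (n+1) => s).filter
            (fun α => Multiset.ofList (List.ofFn α) = m)).filter (fun α => α 0 = a)).card
            = ((Fintype.piFinset fun _ : Fin n => s).filter
              (fun β => Multiset.ofList (List.ofFn β) = m.erase a)).card := by
          apply Finset.card_bij (fun α _ => fun i : Fin n => α i.succ)
          · intro α hα
            simp only [Finset.mem_filter, Fintype.mem_piFinset] at hα ⊢
            obtain ⟨⟨h1, h2⟩, h3⟩ := hα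
            refine ⟨fun i => h1 _, ?_⟩
            have hh : (Multiset.ofList (List.ofFn α))
                = a ::ₘ Multiset.ofList (List.ofFn fun i : Fin n => α i.succ) := by
              rw [List.ofFn_succ, ← h3]; rfl
            rw [← h2, hh, Multiset.erase_cons_head]
          · intro α hα β hβ h
            simp only [Finset.mem_filter] at hα hβ
            funext i
            refine Fin.cases ?_ ?_ i
            · rw [hα.2, hβ.2]
            · intro j; exact congrFun h j
          · intro β hβ
            simp only [Finset.mem_filter, Fintype.mem_piFinset] at hβ ⊢
            refine ⟨Fin.cons a β, ⟨⟨?_, ?_⟩, ?_⟩, ?_⟩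
            · intro i
              refine Fin.cases ?_ ?_ i
              · simpa using ha
              · intro j; simpa using hβ.1 j
            · rw [List.ofFn_succ]
              simp only [Fin.cons_zero, Fin.cons_succ]
              rw [show (Multiset.ofList (a :: List.ofFn β)) = a ::ₘ Multiset.ofList (List.ofFn β) from rfl,
                hβ.2, Multiset.cons_erase ham]
            · simp
            · funext i; simp
        rw [hcard]
        have hprodsplit : ∏ j ∈ s, (m.count j).factorial
            = m.count a * ∏ j ∈ s, ((m.erase a).count j).factorial := by
          rw [← Finset.mul_prod_erase s (fun j => (m.count j).factorial) ha,
              ← Finset.mul_prod_erase s (fun j => ((m.erase a).count j).factorial) ha]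
          have h1 : (m.count a).factorial = m.count a * ((m.erase a).count a).factorial := by
            rw [Multiset.count_erase_self]
            exact (Nat.mul_factorial_pred (Multiset.count_pos.mpr ham).ne').symm
          have h2 : ∀ j ∈ s.erase a, (m.count j).factorial = ((m.erase a).count j).factorial := by
            intro j hj
            rw [Multiset.count_erase_of_ne (Finset.ne_of_mem_erase hj)]
          rw [h1, Finset.prod_congr rfl h2, mul_assoc]
        have hih := ih (m.erase a) (by rw [Multiset.card_erase_of_mem ham, hm]; rfl) s
          (fun x hx => hs x (Multiset.mem_of_mem_erase hx))
        calc _ = m.count a * (((Fintype.piFinset fun _ : Fin n => s).filter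
                (fun β => Multiset.ofList (List.ofFn β) = m.erase a)).card *
              ∏ j ∈ s, ((m.erase a).count j).factorial) := by rw [hprodsplit]; ring
          _ = m.count a * n.factorial := by rw [hih]
      · have hempty : (((Fintype.piFinset fun _ : Fin (n+1) => s).filter
            (fun α => Multiset.ofList (List.ofFn α) = m)).filter (fun α => α 0 = a)) = ∅ := by
          rw [Finset.eq_empty_iff_forall_notMem]
          intro α hα
          simp only [Finset.mem_filter] at hα
          apply ham
          rw [← hα.1.2, ← hα.2]
          exact Multiset.mem_coe.mpr (List.mem_ofFn.mpr ⟨0, rfl⟩)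
        rw [hempty, Multiset.count_eq_zero.mpr ham]
        simp
    have hsumcount : ∑ a ∈ s, m.count a = n + 1 := by
      rw [← hm, ← Multiset.toFinset_sum_count_eq]
      exact (Finset.sum_subset (fun x hx => hs x (Multiset.mem_toFinset.mp hx))
        (fun x _ hx => Multiset.count_eq_zero.mpr (fun h => hx (Multiset.mem_toFinset.mpr h)))).symm
    rw [Finset.card_eq_sum_card_fiberwise (f := fun (α : Fin (n+1) → ℕ) => α 0) (t := s)
      (fun α hα => by
        simp only [Finset.coe_filter, Set.mem_setOf_eq, Fintype.mem_piFinset] at hα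
        exact hα.1 0),
      Finset.sum_mul, Finset.sum_congr rfl hfib, ← Finset.sum_mul, hsumcount]
    exact (Nat.factorial_succ n).symm

/-- for a partition `λ ⊢ k-1` with `ℓ(λ) ≤ n+1-k`,
`Krew(λ+(1^{ℓ(λ)})) · multinomial(n; λ+(1^{n+1-k}))
  = (n!/k!) · ∑_{α ~ λ} (k-1+ℓ(α))! / (ℓ(α)! ∏_i (α_i+1)!)`,
the sum being over all compositions `α` which are rearrangements of `λ`. Here
`λ+(1^{ℓ(λ)})` adds 1 to every part of `λ` (a partition of `k-1+ℓ(λ)`),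
`λ+(1^{n+1-k})` is the partition of `n` with parts `λ_i+1` together with `n+1-k-ℓ(λ)`
ones, `Krew(μ) = (1/(N+1)) multinomial(N+1; N+1-ℓ(μ), m_1(μ), ...)` for `μ ⊢ N`, and
`multinomial(n; ν) = n!/∏_i ν_i!`. -/
theorem kreweras_multinomial_identity (k n : ℕ) (hk : 1 ≤ k) (hn : k - 1 ≤ n)
    (lam : Nat.Partition (k - 1)) (hlen : lam.parts.card ≤ n + 1 - k) :
    ((1 / (((k - 1 + lam.parts.card : ℕ) : ℚ) + 1)) *
        (Nat.multinomial (Finset.univ : Finset (Option (Fin (k - 1 + lam.parts.card))))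
          (fun o => o.elim ((k - 1 + lam.parts.card) + 1 - lam.parts.card)
            (fun j => (lam.parts.map (· + 1)).count ((j : ℕ) + 1))) : ℚ)) *
      ((n.factorial : ℚ) /
        ((((lam.parts.map (· + 1)) + Multiset.replicate (n + 1 - k - lam.parts.card) 1).map
            Nat.factorial).prod : ℕ))
    = ((n.factorial : ℚ) / (k.factorial : ℚ)) *
        ∑ α ∈ (Fintype.piFinset fun _ : Fin lam.parts.card => Finset.Icc 1 (k - 1)).filter
            (fun α => Multiset.ofList (List.ofFn α) = lam.parts),
          ((k - 1 + lam.parts.card).factorial : ℚ) /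
            ((lam.parts.card.factorial : ℚ) * ∏ i, ((α i + 1).factorial : ℚ)) := by
  classical
  set L := lam.parts.card with hL
  set N := k - 1 + L with hNdef
  set P := ∏ j : Fin N, ((lam.parts.map (· + 1)).count ((j : ℕ) + 1)).factorial with hPdef
  set R := ((lam.parts.map (· + 1)).map Nat.factorial).prod with hRdef
  -- basic facts
  have hmem : ∀ x ∈ lam.parts, x ∈ Finset.Icc 1 (k - 1) := by
    intro x hx
    refine Finset.mem_Icc.mpr ⟨lam.parts_pos hx, ?_⟩
    calc x ≤ lam.parts.sum := Multiset.single_le_sum (fun _ _ => Nat.zero_le _) x hx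
      _ = k - 1 := lam.parts_sum
  have hsub : Finset.Icc 1 (k - 1) ⊆ Finset.range N := by
    intro x hx
    rw [Finset.mem_Icc] at hx
    rw [Finset.mem_range]
    have hL1 : 0 < Multiset.card lam.parts := by
      rw [Multiset.card_pos]
      intro h0
      have hps := lam.parts_sum
      rw [h0] at hps
      simp at hps
      omega
    omega
  have hcount0 : ∀ x, x ∉ Finset.Icc 1 (k - 1) → Multiset.count x lam.parts = 0 := by
    intro x hx
    exact Multiset.count_eq_zero.mpr (fun h => hx (hmem x h))
  -- rewrite counts in P
  have hPcount : ∀ j : ℕ,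
      Multiset.count (j + 1) (Multiset.map (fun x => x + 1) lam.parts)
        = Multiset.count j lam.parts := by
    intro j
    exact Multiset.count_map_eq_count' _ _ (fun a b h => by omega) j
  have hP : P = ∏ j ∈ Finset.Icc 1 (k - 1), (Multiset.count j lam.parts).factorial := by
    rw [hPdef]
    simp_rw [hPcount]
    rw [Fin.prod_univ_eq_prod_range (fun j => (Multiset.count j lam.parts).factorial)]
    exact (Finset.prod_subset hsub (fun x _ hx => by rw [hcount0 x hx]; rfl)).symm
  have hS : ∑ j : Fin N, Multiset.count ((j : ℕ) + 1) (Multiset.map (fun x => x + 1) lam.parts)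
      = L := by
    simp_rw [hPcount]
    rw [Fin.sum_univ_eq_sum_range (fun j => Multiset.count j lam.parts)]
    rw [← Finset.sum_subset
        (show lam.parts.toFinset ⊆ Finset.range N from
          fun x hx => hsub (hmem x (Multiset.mem_toFinset.mp hx)))
        (fun x _ hx => Multiset.count_eq_zero.mpr (fun h => hx (Multiset.mem_toFinset.mpr h)))]
    rw [Multiset.toFinset_sum_count_eq]
  -- multinomial computation
  have hM : (k.factorial * P) *
      Nat.multinomial (Finset.univ : Finset (Option (Fin N)))
        (fun o => o.elim (N + 1 - L)
          (fun j => (lam.parts.map (· + 1)).count ((j : ℕ) + 1))) = (N + 1).factorial := by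
    have hspec := Nat.multinomial_spec (Finset.univ : Finset (Option (Fin N)))
      (fun o => o.elim (N + 1 - L)
        (fun j => (lam.parts.map (· + 1)).count ((j : ℕ) + 1)))
    rw [Fintype.prod_option, Fintype.sum_option] at hspec
    simp only [Option.elim_none, Option.elim_some] at hspec
    rw [hS] at hspec
    have e1 : N + 1 - L = k := by omega
    have e2 : N + 1 - L + L = N + 1 := by omega
    rw [e2] at hspec
    rw [e1] at hspec
    simp only [e1]
    exact hspec
  have hc : (((Fintype.piFinset fun _ : Fin L => Finset.Icc 1 (k - 1)).filter
      (fun α => Multiset.ofList (List.ofFn α) = lam.parts)).card : ℕ) * P = L.factorial := by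
    rw [hP]
    exact card_rearrange L lam.parts hL.symm (Finset.Icc 1 (k - 1)) hmem
  have hQ : (((lam.parts.map (· + 1)) + Multiset.replicate (n + 1 - k - L) 1).map
      Nat.factorial).prod = R := by
    rw [Multiset.map_add, Multiset.prod_add, Multiset.map_replicate, Nat.factorial_one,
      Multiset.prod_replicate, one_pow, mul_one, hRdef]
  have hterm : ∀ α ∈ (Fintype.piFinset fun _ : Fin L => Finset.Icc 1 (k - 1)).filter
      (fun α => Multiset.ofList (List.ofFn α) = lam.parts),
      (N.factorial : ℚ) / ((L.factorial : ℚ) * ∏ i, ((α i + 1).factorial : ℚ))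
        = (N.factorial : ℚ) / ((L.factorial : ℚ) * (R : ℚ)) := by
    intro α hα
    rw [Finset.mem_filter] at hα
    have hnat : ∏ i : Fin L, (α i + 1).factorial = R := by
      calc ∏ i : Fin L, (α i + 1).factorial
          = (List.ofFn (fun i => (α i + 1).factorial)).prod := List.prod_ofFn.symm
        _ = ((List.ofFn α).map (fun x => (x + 1).factorial)).prod := by
            rw [List.map_ofFn]
            rfl
        _ = ((Multiset.ofList (List.ofFn α)).map (fun x => (x + 1).factorial)).prod := by
            rfl
        _ = R := by
            rw [hα.2, hRdef, Multiset.map_map]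
            rfl
    rw [show ((R : ℕ) : ℚ) = ∏ i, ((α i + 1).factorial : ℚ) by rw [← hnat]; push_cast; rfl]
  rw [Finset.sum_congr rfl hterm, Finset.sum_const, nsmul_eq_mul, hQ]
  -- nonzeroness
  have hP0 : (P : ℚ) ≠ 0 := by
    rw [hPdef]
    push_cast
    exact Finset.prod_ne_zero_iff.mpr (fun i _ => Nat.cast_ne_zero.mpr (Nat.factorial_ne_zero _))
  have hR0 : (R : ℚ) ≠ 0 := by
    have hRpos : 0 < R := by
      rw [hRdef]
      refine Multiset.prod_pos ?_
      intro x hx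
      obtain ⟨y, _, rfl⟩ := Multiset.mem_map.mp hx
      exact Nat.factorial_pos y
    exact Nat.cast_ne_zero.mpr hRpos.ne'
  have hk0 : ((k.factorial : ℕ) : ℚ) ≠ 0 := Nat.cast_ne_zero.mpr (Nat.factorial_ne_zero _)
  have hL0 : ((L.factorial : ℕ) : ℚ) ≠ 0 := Nat.cast_ne_zero.mpr (Nat.factorial_ne_zero _)
  have hN0 : ((N : ℚ) + 1) ≠ 0 := by positivity
  have hM' : (((k.factorial : ℕ) : ℚ) * (P : ℚ)) *
      ((Nat.multinomial (Finset.univ : Finset (Option (Fin N)))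
        (fun o => o.elim (N + 1 - L)
          (fun j => (lam.parts.map (· + 1)).count ((j : ℕ) + 1))) : ℕ) : ℚ)
      = (((N + 1).factorial : ℕ) : ℚ) := by exact_mod_cast hM
  have hc' : ((((Fintype.piFinset fun _ : Fin L => Finset.Icc 1 (k - 1)).filter
      (fun α => Multiset.ofList (List.ofFn α) = lam.parts)).card : ℕ) : ℚ) * (P : ℚ)
      = ((L.factorial : ℕ) : ℚ) := by exact_mod_cast hc
  rw [Nat.factorial_succ] at hM'
  push_cast at hM'
  have hMval : ((Nat.multinomial (Finset.univ : Finset (Option (Fin N)))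
      (fun o => o.elim (N + 1 - L)
        (fun j => (lam.parts.map (· + 1)).count ((j : ℕ) + 1))) : ℕ) : ℚ)
      = ((N : ℚ) + 1) * (N.factorial : ℚ) / ((k.factorial : ℚ) * (P : ℚ)) := by
    rw [eq_div_iff (mul_ne_zero hk0 hP0)]
    linear_combination hM'
  have hcval : ((((Fintype.piFinset fun _ : Fin L => Finset.Icc 1 (k - 1)).filter
      (fun α => Multiset.ofList (List.ofFn α) = lam.parts)).card : ℕ) : ℚ)
      = ((L.factorial : ℚ)) / (P : ℚ) := by
    rw [eq_div_iff hP0]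
    exact hc'
  rw [hMval, hcval]
  field_simp
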